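/- arXiv:0709.2812 — 2 statements merged into one kernel-verified Lean document; each statement's English description precedes it below -/
import Mathlib

section
/- Let 𝓗 be a nonzero complex Hilbert space, let A be a bounded self-adjoint operator on 𝓗 with re⟨φ, Aφ⟩ ≥ 0 for all φ ∈ 𝓗, and let B₁, B₂, B₃ be bounded self-adjoint operators on 𝓗 such that ‖B₁φ‖² + ‖B₂φ‖² + ‖B₃φ‖² ≤ 2·re⟨φ, Aφ⟩ for all φ ∈ 𝓗. Set E := inf{ re⟨φ, Aφ⟩ : φ ∈ 𝓗, ‖φ‖ = 1 }, and assume √(2E) ≤ 1/3 + c for some real c ≥ 0. Then for every nonzero vector k = (k₁,k₂,k₃) ∈ ℝ³ and every unit vector φ ∈ 𝓗: re⟨φ, Aφ⟩ + k₁·re⟨φ, B₁φ⟩ + k₂·re⟨φ, B₂φ⟩ + k₃·re⟨φ, B₃φ⟩ + |k|²/2 > E − (1/3 + c)·|k|. -/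
set_option maxHeartbeats 1000000


/-- abstract operator-theoretic form of the spectral estimate (I4).
`𝓗` is a nonzero complex Hilbert space, `A` a bounded self-adjoint operator with
nonnegative quadratic form, `B₁, B₂, B₃` bounded self-adjoint operators with
`‖B₁φ‖² + ‖B₂φ‖² + ‖B₃φ‖² ≤ 2·re⟨φ, Aφ⟩`. With
`E = inf { re⟨φ, Aφ⟩ : ‖φ‖ = 1 }` and `√(2E) ≤ 1/3 + c`, for every nonzero
`k = (k₁,k₂,k₃) ∈ ℝ³` and unit vector `φ`:
`re⟨φ, Aφ⟩ + Σᵢ kᵢ·re⟨φ, Bᵢφ⟩ + |k|²/2 > E − (1/3 + c)·|k|`. -/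
theorem stmt_2 {𝓗 : Type*} [NormedAddCommGroup 𝓗] [InnerProductSpace ℂ 𝓗]
    [CompleteSpace 𝓗] [Nontrivial 𝓗]
    (A B₁ B₂ B₃ : 𝓗 →L[ℂ] 𝓗)
    (hA : IsSelfAdjoint A) (hB₁ : IsSelfAdjoint B₁)
    (hB₂ : IsSelfAdjoint B₂) (hB₃ : IsSelfAdjoint B₃)
    (hApos : ∀ φ : 𝓗, 0 ≤ (inner ℂ φ (A φ) : ℂ).re)
    (hbound : ∀ φ : 𝓗,
      ‖B₁ φ‖ ^ 2 + ‖B₂ φ‖ ^ 2 + ‖B₃ φ‖ ^ 2 ≤ 2 * (inner ℂ φ (A φ) : ℂ).re)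
    (E : ℝ)
    (hE : E = sInf {x : ℝ | ∃ φ : 𝓗, ‖φ‖ = 1 ∧ x = (inner ℂ φ (A φ) : ℂ).re})
    (c : ℝ) (hc : 0 ≤ c) (hEc : Real.sqrt (2 * E) ≤ 1 / 3 + c)
    (k₁ k₂ k₃ : ℝ) (hk : ¬(k₁ = 0 ∧ k₂ = 0 ∧ k₃ = 0))
    (φ : 𝓗) (hφ : ‖φ‖ = 1) :
    (inner ℂ φ (A φ) : ℂ).re + k₁ * (inner ℂ φ (B₁ φ) : ℂ).re
        + k₂ * (inner ℂ φ (B₂ φ) : ℂ).re + k₃ * (inner ℂ φ (B₃ φ) : ℂ).re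
        + (k₁ ^ 2 + k₂ ^ 2 + k₃ ^ 2) / 2
      > E - (1 / 3 + c) * Real.sqrt (k₁ ^ 2 + k₂ ^ 2 + k₃ ^ 2) := by
  set a : ℝ := (inner ℂ φ (A φ) : ℂ).re with ha
  set b₁ : ℝ := (inner ℂ φ (B₁ φ) : ℂ).re with hb₁
  set b₂ : ℝ := (inner ℂ φ (B₂ φ) : ℂ).re with hb₂
  set b₃ : ℝ := (inner ℂ φ (B₃ φ) : ℂ).re with hb₃
  have ha0 : 0 ≤ a := hApos φ
  -- E ≤ a and 0 ≤ E
  have hSne : a ∈ {x : ℝ | ∃ ψ : 𝓗, ‖ψ‖ = 1 ∧ x = (inner ℂ ψ (A ψ) : ℂ).re} :=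
    ⟨φ, hφ, rfl⟩
  have hbdd : BddBelow {x : ℝ | ∃ ψ : 𝓗, ‖ψ‖ = 1 ∧ x = (inner ℂ ψ (A ψ) : ℂ).re} := by
    refine ⟨0, ?_⟩
    rintro x ⟨ψ, -, rfl⟩
    exact hApos ψ
  have hEa : E ≤ a := by rw [hE]; exact csInf_le hbdd hSne
  have hE0 : 0 ≤ E := by
    rw [hE]
    apply le_csInf ⟨a, hSne⟩
    rintro x ⟨ψ, -, rfl⟩
    exact hApos ψ
  -- |bᵢ| ≤ ‖Bᵢ φ‖
  have habs : ∀ (T : 𝓗 →L[ℂ] 𝓗), |(inner ℂ φ (T φ) : ℂ).re| ≤ ‖T φ‖ := by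
    intro T
    calc |(inner ℂ φ (T φ) : ℂ).re| ≤ ‖(inner ℂ φ (T φ) : ℂ)‖ := Complex.abs_re_le_norm _
      _ ≤ ‖φ‖ * ‖T φ‖ := norm_inner_le_norm _ _
      _ = ‖T φ‖ := by rw [hφ, one_mul]
  have hn1 := habs B₁
  have hn2 := habs B₂
  have hn3 := habs B₃
  have hb1sq : b₁ ^ 2 ≤ ‖B₁ φ‖ ^ 2 := by
    have := abs_nonneg b₁; nlinarith [sq_abs b₁]
  have hb2sq : b₂ ^ 2 ≤ ‖B₂ φ‖ ^ 2 := by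
    have := abs_nonneg b₂; nlinarith [sq_abs b₂]
  have hb3sq : b₃ ^ 2 ≤ ‖B₃ φ‖ ^ 2 := by
    have := abs_nonneg b₃; nlinarith [sq_abs b₃]
  have hsum : b₁ ^ 2 + b₂ ^ 2 + b₃ ^ 2 ≤ 2 * a := by
    have := hbound φ; linarith
  clear_value a b₁ b₂ b₃
  clear ha hb₁ hb₂ hb₃ hE hbound hApos hSne hbdd hn1 hn2 hn3 habs hA hB₁ hB₂ hB₃
  set K : ℝ := k₁ ^ 2 + k₂ ^ 2 + k₃ ^ 2 with hKdef
  have hK0 : 0 < K := by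
    rcases not_and_or.mp hk with h | h
    · nlinarith [sq_nonneg k₂, sq_nonneg k₃, pow_pos (abs_pos.mpr h : (0:ℝ) < _) 2, sq_abs k₁]
    · rcases not_and_or.mp h with h | h
      · nlinarith [sq_nonneg k₁, sq_nonneg k₃, pow_pos (abs_pos.mpr h : (0:ℝ) < _) 2, sq_abs k₂]
      · nlinarith [sq_nonneg k₁, sq_nonneg k₂, pow_pos (abs_pos.mpr h : (0:ℝ) < _) 2, sq_abs k₃]
  set r : ℝ := Real.sqrt K with hrdef
  have hr0 : 0 < r := Real.sqrt_pos.mpr hK0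
  have hr2 : r ^ 2 = K := Real.sq_sqrt hK0.le
  set x : ℝ := Real.sqrt (2 * a) with hxdef
  have hx0 : 0 ≤ x := Real.sqrt_nonneg _
  have hx2 : x ^ 2 = 2 * a := Real.sq_sqrt (by linarith)
  set s : ℝ := Real.sqrt (2 * E) with hsdef
  have hs0 : 0 ≤ s := Real.sqrt_nonneg _
  have hs2 : s ^ 2 = 2 * E := Real.sq_sqrt (by linarith)
  have hxs : s ≤ x := Real.sqrt_le_sqrt (by linarith)
  -- Cauchy–Schwarz in ℝ³
  have hCS : (k₁ * b₁ + k₂ * b₂ + k₃ * b₃) ^ 2 ≤ K * (b₁ ^ 2 + b₂ ^ 2 + b₃ ^ 2) := by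
    nlinarith [sq_nonneg (k₁ * b₂ - k₂ * b₁), sq_nonneg (k₁ * b₃ - k₃ * b₁),
      sq_nonneg (k₂ * b₃ - k₃ * b₂)]
  have hCS2 : (k₁ * b₁ + k₂ * b₂ + k₃ * b₃) ^ 2 ≤ (r * x) ^ 2 := by
    have : K * (b₁ ^ 2 + b₂ ^ 2 + b₃ ^ 2) ≤ K * (2 * a) :=
      mul_le_mul_of_nonneg_left hsum hK0.le
    calc (k₁ * b₁ + k₂ * b₂ + k₃ * b₃) ^ 2 ≤ K * (2 * a) := le_trans hCS this
      _ = (r * x) ^ 2 := by rw [mul_pow, hr2, hx2]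
  have hrx : 0 ≤ r * x := mul_nonneg hr0.le hx0
  have hkb : -(r * x) ≤ k₁ * b₁ + k₂ * b₂ + k₃ * b₃ := by nlinarith
  -- key scalar inequality
  have ht : s ≤ 1 / 3 + c := hEc
  have key : x ^ 2 / 2 - r * x + r ^ 2 / 2 + (1 / 3 + c) * r - s ^ 2 / 2 > 0 := by
    rcases le_or_gt s r with h | h
    · nlinarith [sq_nonneg (x - r), mul_pos (show (0:ℝ) < 1 / 3 + c by linarith) hr0,
        mul_nonneg (sub_nonneg.mpr h) hs0, mul_nonneg (sub_nonneg.mpr ht) hr0.le]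
    · nlinarith [mul_nonneg (sub_nonneg.mpr hxs) (show 0 ≤ x + s - 2 * r by linarith),
        mul_nonneg (sub_nonneg.mpr ht) hr0.le]
  have : a + (k₁ * b₁ + k₂ * b₂ + k₃ * b₃) + K / 2 > E - (1 / 3 + c) * r := by
    nlinarith [key]
  linarith
end

section
/- Let E ∈ ℝ and g > 0, and let μ be a finite Borel measure on ℝ whose support is contained in [E + g, ∞). Then for all complex numbers z and z' with |z − E| ≤ g/2 and |z' − E| ≤ g/2 one has ∫ |λ − z'|⁻¹ dμ(λ) ≤ 6·| ∫ (λ − z)⁻¹ dμ(λ) |. -/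
open MeasureTheory

/-- Let `E ∈ ℝ`, `g > 0`, and let `μ` be a finite Borel measure on `ℝ`
supported in `[E + g, ∞)` (i.e. `μ (Iio (E+g)) = 0`). Then for all `z, z' ∈ ℂ` with
`|z − E| ≤ g/2` and `|z' − E| ≤ g/2`:
`∫ |λ − z'|⁻¹ dμ(λ) ≤ 6·|∫ (λ − z)⁻¹ dμ(λ)|`. -/
theorem stmt_4 (E g : ℝ) (hg : 0 < g)
    (μ : Measure ℝ) [IsFiniteMeasure μ]
    (hsupp : μ (Set.Iio (E + g)) = 0)
    (z z' : ℂ) (hz : ‖z - (E : ℂ)‖ ≤ g / 2)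
    (hz' : ‖z' - (E : ℂ)‖ ≤ g / 2) :
    ∫ l, ‖(l : ℂ) - z'‖⁻¹ ∂μ ≤ 6 * ‖∫ l, ((l : ℂ) - z)⁻¹ ∂μ‖ := by
  have hae : ∀ᵐ l ∂μ, E + g ≤ l := by
    rw [ae_iff]
    convert hsupp using 2
    ext l; simp [not_le]
  have hrez : z.re ≤ E + g / 2 := by
    have h := (Complex.abs_re_le_norm (z - (E : ℂ))).trans hz
    simp only [Complex.sub_re, Complex.ofReal_re] at h
    linarith [abs_le.mp h]
  have hrez2 : z'.re ≤ E + g / 2 := by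
    have h := (Complex.abs_re_le_norm (z' - (E : ℂ))).trans hz'
    simp only [Complex.sub_re, Complex.ofReal_re] at h
    linarith [abs_le.mp h]
  have himz : |z.im| ≤ g / 2 := by
    have h := (Complex.abs_im_le_norm (z - (E : ℂ))).trans hz
    simpa using h
  have keyA : ∀ l : ℝ, E + g ≤ l → g / 2 ≤ ‖(l : ℂ) - z‖ := by
    intro l hl
    have : g / 2 ≤ ((l : ℂ) - z).re := by
      simp only [Complex.sub_re, Complex.ofReal_re]; linarith
    exact this.trans (Complex.re_le_norm _)
  have keyA' : ∀ l : ℝ, E + g ≤ l → g / 2 ≤ ‖(l : ℂ) - z'‖ := by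
    intro l hl
    have : g / 2 ≤ ((l : ℂ) - z').re := by
      simp only [Complex.sub_re, Complex.ofReal_re]; linarith
    exact this.trans (Complex.re_le_norm _)
  have keyB : ∀ l : ℝ, E + g ≤ l → ‖(l : ℂ) - z‖ ≤ 2 * (l - z.re) := by
    intro l hl
    have h2 : 0 ≤ l - z.re := by linarith
    have hsq : ‖(l : ℂ) - z‖ ^ 2 ≤ (2 * (l - z.re)) ^ 2 := by
      rw [Complex.sq_norm, Complex.normSq_apply]
      simp only [Complex.sub_re, Complex.sub_im, Complex.ofReal_re, Complex.ofReal_im]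
      nlinarith [abs_le.mp himz, sq_nonneg (l - z.re)]
    exact (pow_le_pow_iff_left₀ (norm_nonneg _) (by positivity) two_ne_zero).mp hsq
  have keyC : ∀ l : ℝ, E + g ≤ l →
      (‖(l : ℂ) - z‖)⁻¹ ≤ 2 * (((l : ℂ) - z)⁻¹).re := by
    intro l hl
    have ha := keyA l hl
    have hb := keyB l hl
    have hpos : 0 < ‖(l : ℂ) - z‖ := lt_of_lt_of_le (by linarith) ha
    rw [Complex.inv_re, Complex.normSq_eq_norm_sq]
    simp only [Complex.sub_re, Complex.ofReal_re]
    have heq : (‖(l : ℂ) - z‖)⁻¹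
        = ‖(l:ℂ)-z‖ / ‖(l:ℂ)-z‖ ^ 2 := by
      field_simp
    rw [heq, ← mul_div_assoc]
    gcongr
  have keyD : ∀ l : ℝ, E + g ≤ l →
      ‖(l : ℂ) - z'‖⁻¹ ≤ 3 * ‖(l : ℂ) - z‖⁻¹ := by
    intro l hl
    have ha' := keyA' l hl
    have hzz : ‖z' - z‖ ≤ g := by
      have h1 := norm_sub_le_norm_sub_add_norm_sub z' (E : ℂ) z
      have h2 : ‖(E : ℂ) - z‖ = ‖z - (E : ℂ)‖ :=
        norm_sub_rev _ _
      linarith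
    have htri : ‖(l : ℂ) - z‖ ≤ 3 * ‖(l : ℂ) - z'‖ := by
      have h1 := norm_sub_le_norm_sub_add_norm_sub ((l : ℂ)) z' z
      linarith
    have h0 : 0 < ‖(l : ℂ) - z‖ := lt_of_lt_of_le (by linarith) (keyA l hl)
    have hpos : 0 < ‖(l : ℂ) - z‖ / 3 := by positivity
    calc (‖(l:ℂ)-z'‖)⁻¹ ≤ (‖(l:ℂ)-z‖/3)⁻¹ :=
          inv_anti₀ hpos (by linarith)
      _ = 3 * (‖(l:ℂ)-z‖)⁻¹ := by rw [div_eq_mul_inv, mul_inv, inv_inv]; ring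
  -- integrability
  have hmeas : Measurable fun l : ℝ => ((l : ℂ) - z)⁻¹ :=
    (Complex.measurable_ofReal.sub measurable_const).inv
  have hint1 : Integrable (fun l : ℝ => ((l : ℂ) - z)⁻¹) μ := by
    refine ⟨hmeas.aestronglyMeasurable, HasFiniteIntegral.of_bounded (C := 2 / g) ?_⟩
    filter_upwards [hae] with l hl
    have hA := keyA l hl
    rw [norm_inv]
    rw [inv_le_comm₀ (lt_of_lt_of_le (by linarith) hA) (by positivity)]
    calc (2 / g)⁻¹ = g / 2 := by rw [inv_div]
      _ ≤ _ := hA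
  have hint2 : Integrable (fun l : ℝ => ‖(l : ℂ) - z‖⁻¹) μ := by
    simpa only [norm_inv] using hint1.norm
  have hint3 : Integrable (fun l : ℝ => ‖(l : ℂ) - z'‖⁻¹) μ := by
    refine ⟨((Complex.measurable_ofReal.sub measurable_const).norm.inv).aestronglyMeasurable,
      HasFiniteIntegral.of_bounded (C := 2 / g) ?_⟩
    filter_upwards [hae] with l hl
    have hA := keyA' l hl
    rw [Real.norm_eq_abs, abs_inv, abs_norm]
    rw [inv_le_comm₀ (lt_of_lt_of_le (by linarith) hA) (by positivity)]
    calc (2 / g)⁻¹ = g / 2 := by rw [inv_div]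
      _ ≤ _ := hA
  -- main chain
  calc ∫ l, ‖(l : ℂ) - z'‖⁻¹ ∂μ
      ≤ ∫ l, 3 * ‖(l : ℂ) - z‖⁻¹ ∂μ := by
        refine integral_mono_ae hint3 (hint2.const_mul 3) ?_
        filter_upwards [hae] with l hl using keyD l hl
    _ = 3 * ∫ l, ‖(l : ℂ) - z‖⁻¹ ∂μ := integral_const_mul 3 _
    _ ≤ 3 * ∫ l, 2 * (((l : ℂ) - z)⁻¹).re ∂μ := by
        refine mul_le_mul_of_nonneg_left ?_ (by norm_num)
        refine integral_mono_ae hint2 (hint1.re.const_mul 2) ?_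
        filter_upwards [hae] with l hl
        simpa using keyC l hl
    _ = 6 * (∫ l, ((l : ℂ) - z)⁻¹ ∂μ).re := by
        rw [integral_const_mul]
        have h := integral_re hint1
        simp only [RCLike.re_to_complex] at h
        rw [← h]; ring
    _ ≤ 6 * ‖∫ l, ((l : ℂ) - z)⁻¹ ∂μ‖ :=
        mul_le_mul_of_nonneg_left (Complex.re_le_norm _) (by norm_num)
end
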